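/- Let p ≥ 1 and let [ℓ_1,u_1),…,[ℓ_p,u_p) be nonempty half-open real intervals with ℓ_1 ≤ … ≤ ℓ_p. Let i ∈ {1,…,p} and j ∈ ℕ, and suppose the number of indices m with i ≤ m ≤ p and u_m < u_i is strictly greater than j. Then D(i,j) = D(i+1,j), i.e., interval [ℓ_i,u_i) can be removed from consideration without changing the optimum. (This is the Remark that D(i,j) = D(i+1,j) whenever j is smaller than the rank h satisfying α_i(h) = i.) -/
import Mathlib


open Classical

/-- Remark on the recursion for the exception-allowable minimum intersecting set
problem: for sorted nonempty half-open intervals `[ℓ h, u h)` (`h = 1,…,p`), if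
the number of indices `m ∈ {i,…,p}` with `u m < u i` is strictly greater than
`j`, then `D i j = D (i+1) j`, where `D i j` is the least cardinality of a
finite set of reals missing at most `j` of the intervals indexed by `i,…,p`. -/
theorem D_eq_of_rank_gt
    (p : ℕ) (hp : 1 ≤ p) (ℓ u : ℕ → ℝ)
    (hne : ∀ h, 1 ≤ h → h ≤ p → ℓ h < u h)
    (hsorted : ∀ h, 1 ≤ h → h < p → ℓ h ≤ ℓ (h + 1))
    (D : ℕ → ℕ → ℕ)
    (hD : ∀ i j, 1 ≤ i → i ≤ p + 1 →
      D i j = sInf {c | ∃ S : Finset ℝ, S.card = c ∧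
        ((Finset.Icc i p).filter
          (fun h => ∀ x ∈ S, x ∉ Set.Ico (ℓ h) (u h))).card ≤ j})
    (i j : ℕ) (hi1 : 1 ≤ i) (hip : i ≤ p)
    (hrank : j < ((Finset.Icc i p).filter (fun m => u m < u i)).card) :
    D i j = D (i + 1) j := by
  have hmono : ∀ m, i ≤ m → m ≤ p → ℓ i ≤ ℓ m := by
    intro m hm
    induction m, hm using Nat.le_induction with
    | base => intro _; exact le_rfl
    | succ n hn ih =>
      intro hnp
      exact le_trans (ih (by omega)) (hsorted n (by omega) (by omega))
  have hIcc : Finset.Icc i p = insert i (Finset.Icc (i + 1) p) := by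
    ext m
    simp only [Finset.mem_Icc, Finset.mem_insert]
    omega
  rw [hD i j hi1 (by omega), hD (i+1) j (by omega) (by omega)]
  congr 1
  ext c
  constructor
  · rintro ⟨S, hScard, hSmiss⟩
    refine ⟨S, hScard, le_trans (Finset.card_le_card ?_) hSmiss⟩
    apply Finset.filter_subset_filter
    exact Finset.Icc_subset_Icc_left (by omega)
  · rintro ⟨S, hScard, hSmiss⟩
    refine ⟨S, hScard, ?_⟩
    -- S must hit interval i
    have hhit : ¬ (∀ x ∈ S, x ∉ Set.Ico (ℓ i) (u i)) := by
      intro hmissI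
      -- then S misses all m ∈ Icc (i+1) p with u m < u i
      have hsub : (Finset.Icc i p).filter (fun m => u m < u i) ⊆
          (Finset.Icc (i + 1) p).filter
            (fun h => ∀ x ∈ S, x ∉ Set.Ico (ℓ h) (u h)) := by
        intro m hm
        simp only [Finset.mem_filter, Finset.mem_Icc] at hm ⊢
        obtain ⟨⟨him, hmp⟩, hum⟩ := hm
        have hmi : m ≠ i := by rintro rfl; exact lt_irrefl _ hum
        refine ⟨⟨by omega, hmp⟩, ?_⟩
        intro x hx hxm
        exact hmissI x hx ⟨le_trans (hmono m him hmp) hxm.1, lt_of_lt_of_le hxm.2 hum.le⟩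
      have := le_trans (Finset.card_le_card hsub) hSmiss
      omega
    push_neg at hhit
    obtain ⟨x, hxS, hxI⟩ := hhit
    have : (Finset.Icc i p).filter (fun h => ∀ x ∈ S, x ∉ Set.Ico (ℓ h) (u h)) =
        (Finset.Icc (i + 1) p).filter (fun h => ∀ x ∈ S, x ∉ Set.Ico (ℓ h) (u h)) := by
      rw [hIcc, Finset.filter_insert]
      rw [if_neg]
      push_neg
      exact ⟨x, hxS, hxI⟩
    rw [this]
    exact hSmiss
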